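/- Let (X,d,μ) be an η-Ahlfors regular quasi-metric measure space with η > 0, triangular constant κ ≥ 1 and Ahlfors constants 0 < a ≤ A < ∞, and let ρ be the third order hypermetric induced by d. Let φ : (0,∞) → [0,∞) be a nonincreasing function. Then there exist constants 0 < C₁ ≤ C₂ < ∞, depending only on κ, a and A (and η), such that for every x ∈ X: C₁ ∫₀^∞ φ(t) t^{2η−1} dt ≤ ∬_{X×X} φ(ρ(x,y,z)) dμ(y) dμ(z) ≤ C₂ ∫₀^∞ φ(t) t^{2η−1} dt. -/

import Mathlib

open MeasureTheory ENNReal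

/-- The third order hypermetric induced by `d`:
`ρ(x,y,z) = inf_{u ∈ X} max {d(x,u), d(y,u), d(z,u)}`. -/
noncomputable def hyperRho {X : Type*} (d : X → X → ℝ) (x y z : X) : ℝ :=
  ⨅ u : X, max (d x u) (max (d y u) (d z u))

/-- `d` is a quasi-metric on `X` with triangular constant `κ`. -/
def IsQuasiMetric {X : Type*} (d : X → X → ℝ) (κ : ℝ) : Prop :=
  (∀ x y, 0 ≤ d x y) ∧ (∀ x y, (d x y = 0 ↔ x = y)) ∧ (∀ x y, d x y = d y x) ∧
    (∀ x y z, d x z ≤ κ * (d x y + d y z))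

/-- `(X,d,μ)` is `η`-Ahlfors regular with constants `a ≤ A`. -/
def IsAhlfors {X : Type*} [MeasurableSpace X] (d : X → X → ℝ) (μ : Measure X)
    (η a A : ℝ) : Prop :=
  ∀ x : X, ∀ r : ℝ, 0 < r →
    ENNReal.ofReal (a * r ^ η) ≤ μ {y | d x y < r} ∧
      μ {y | d x y < r} ≤ ENNReal.ofReal (A * r ^ η)

section AuxST9

open Set Filter

/-- Trichotomy for "initial segments" of `(0,∞)`. -/
lemma st9_initial_trichotomy (S : Set ℝ) (h0 : S ⊆ Set.Ioi 0)
    (hI : ∀ s ∈ S, Set.Ioo 0 s ⊆ S) :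
    S = ∅ ∨ (∃ T : ℝ, 0 < T ∧ Set.Ioo 0 T ⊆ S ∧ S ⊆ Set.Ioc 0 T ∧
      volume S = ENNReal.ofReal T) ∨ S = Set.Ioi 0 := by
  rcases Set.eq_empty_or_nonempty S with h | ⟨s₀, hs₀⟩
  · exact Or.inl h
  by_cases hb : BddAbove S
  · refine Or.inr (Or.inl ⟨sSup S, ?_, ?_, ?_, ?_⟩)
    · exact lt_of_lt_of_le (h0 hs₀) (le_csSup hb hs₀)
    · intro r hr
      obtain ⟨s, hsS, hrs⟩ := exists_lt_of_lt_csSup ⟨s₀, hs₀⟩ hr.2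
      exact hI s hsS ⟨hr.1, hrs⟩
    · exact fun s hs => ⟨h0 hs, le_csSup hb hs⟩
    · refine le_antisymm ?_ ?_
      · calc volume S ≤ volume (Set.Ioc 0 (sSup S)) :=
              measure_mono (fun s hs => ⟨h0 hs, le_csSup hb hs⟩)
          _ = ENNReal.ofReal (sSup S) := by rw [Real.volume_Ioc, sub_zero]
      · calc ENNReal.ofReal (sSup S) = volume (Set.Ioo 0 (sSup S)) := by
              rw [Real.volume_Ioo, sub_zero]
          _ ≤ volume S := measure_mono (fun r hr => by
              obtain ⟨s, hsS, hrs⟩ := exists_lt_of_lt_csSup ⟨s₀, hs₀⟩ hr.2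
              exact hI s hsS ⟨hr.1, hrs⟩)
  · refine Or.inr (Or.inr ?_)
    ext r
    constructor
    · exact fun h => h0 h
    · intro hr
      obtain ⟨s, hsS, hrs⟩ := not_bddAbove_iff.mp hb r
      exact hI s hsS ⟨hr, hrs⟩

lemma st9_initial_measurable (S : Set ℝ) (h0 : S ⊆ Set.Ioi 0)
    (hI : ∀ s ∈ S, Set.Ioo 0 s ⊆ S) : MeasurableSet S := by
  rcases st9_initial_trichotomy S h0 hI with h | ⟨T, hT, hsub, hsup, _⟩ | h
  · simp [h]
  · have : S = Set.Ioo 0 T ∪ (S \ Set.Ioo 0 T) := by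
      rw [Set.union_diff_cancel' (by rfl) hsub]
    rw [this]
    refine measurableSet_Ioo.union (Set.Countable.measurableSet ?_)
    refine Set.Countable.mono ?_ (Set.countable_singleton T)
    intro s ⟨hsS, hs⟩
    have h1 := hsup hsS
    simp only [Set.mem_Ioo, not_and] at hs
    exact le_antisymm h1.2 (not_lt.mp (hs h1.1))
  · rw [h]; exact measurableSet_Ioi

/-- Limit helper: upper bound. -/
lemma st9_le_ofReal_of_forall_gt {A η : ℝ} (hη : 0 < η) {b : ℝ} (hb : 0 ≤ b) {m : ℝ≥0∞}
    (h : ∀ r : ℝ, b < r → m ≤ ENNReal.ofReal (A * r ^ η)) :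
    m ≤ ENNReal.ofReal (A * b ^ η) := by
  have hcont : ContinuousAt (fun r : ℝ => ENNReal.ofReal (A * r ^ η)) b := by
    refine ENNReal.continuous_ofReal.continuousAt.comp ?_
    exact continuousAt_const.mul (Real.continuousAt_rpow_const b η (Or.inr hη.le))
  have htend : Tendsto (fun r : ℝ => ENNReal.ofReal (A * r ^ η)) (nhdsWithin b (Set.Ioi b))
      (nhds (ENNReal.ofReal (A * b ^ η))) :=
    hcont.continuousWithinAt.tendsto
  exact ge_of_tendsto htend (eventually_nhdsWithin_of_forall h)

/-- Limit helper: infinite. -/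
lemma st9_eq_top_of_forall_nat {a c : ℝ} (ha : 0 < a) (hc : 0 < c) {m : ℝ≥0∞}
    (h : ∀ n : ℕ, ENNReal.ofReal (a * ((n : ℝ) + 1) ^ c) ≤ m) : m = ⊤ := by
  have h1 : Tendsto (fun n : ℕ => a * ((n : ℝ) + 1) ^ c) atTop atTop := by
    refine Filter.Tendsto.const_mul_atTop ha ?_
    refine (tendsto_rpow_atTop hc).comp ?_
    exact tendsto_atTop_add_const_right _ 1 tendsto_natCast_atTop_atTop
  have h2 : Tendsto (fun n : ℕ => ENNReal.ofReal (a * ((n : ℝ) + 1) ^ c)) atTop (nhds ⊤) :=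
    ENNReal.tendsto_ofReal_atTop.comp h1
  exact top_le_iff.mp (le_of_tendsto h2 (Filter.Eventually.of_forall h))

/-- `∫₀ᵀ s^(2η-1) ds = T^(2η)/(2η)`. -/
lemma st9_lintegral_Ioo_rpow {η : ℝ} (hη : 0 < η) {T : ℝ} (hT : 0 < T) :
    ∫⁻ s in Set.Ioo 0 T, ENNReal.ofReal (s ^ (2 * η - 1)) =
      ENNReal.ofReal (T ^ (2 * η) / (2 * η)) := by
  have hexp : (-1 : ℝ) < 2 * η - 1 := by linarith
  have hint : IntegrableOn (fun s : ℝ => s ^ (2 * η - 1)) (Set.Ioo 0 T) volume := by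
    have := (intervalIntegral.intervalIntegrable_rpow' (a := 0) (b := T) hexp).1
    exact this.mono_set Set.Ioo_subset_Ioc_self
  rw [← MeasureTheory.ofReal_integral_eq_lintegral_ofReal hint]
  · congr 1
    have h1 : ∫ s in Set.Ioo 0 T, s ^ (2 * η - 1) = ∫ s in Set.Ioc 0 T, s ^ (2 * η - 1) :=
      (MeasureTheory.integral_Ioc_eq_integral_Ioo).symm
    rw [h1, ← intervalIntegral.integral_of_le hT.le, integral_rpow (Or.inl hexp)]
    rw [sub_add_cancel]
    rw [Real.zero_rpow (by linarith : 2 * η ≠ 0)]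
    ring_nf
  · exact (ae_restrict_iff' measurableSet_Ioo).mpr (Filter.Eventually.of_forall
      (fun s hs => Real.rpow_nonneg hs.1.le _))

/-- The main integral identity over an initial segment. -/
lemma st9_lintegral_initial {η : ℝ} (hη : 0 < η) (S : Set ℝ) (h0 : S ⊆ Set.Ioi 0)
    (hI : ∀ s ∈ S, Set.Ioo 0 s ⊆ S) :
    ∫⁻ s in S, ENNReal.ofReal (s ^ (2 * η - 1)) =
      volume S ^ (2 * η) * (ENNReal.ofReal (2 * η))⁻¹ := by
  have h2η : (0:ℝ) < 2 * η := by linarith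
  rcases st9_initial_trichotomy S h0 hI with h | ⟨T, hT, hsub, hsup, hvol⟩ | h
  · simp [h, ENNReal.zero_rpow_of_pos h2η]
  · have hae : S =ᵐ[volume] Set.Ioo 0 T := by
      have h1 : volume (S \ Set.Ioo 0 T) = 0 := by
        refine measure_mono_null ?_ (measure_singleton T)
        intro s ⟨hsS, hs⟩
        have := hsup hsS
        simp only [Set.mem_Ioo, not_and] at hs
        exact le_antisymm this.2 (not_lt.mp (hs this.1))
      have h2 : volume (Set.Ioo 0 T \ S) = 0 := by
        rw [Set.diff_eq_empty.mpr hsub]; simp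
      exact MeasureTheory.ae_eq_set.mpr ⟨h1, h2⟩
    rw [MeasureTheory.setLIntegral_congr hae, st9_lintegral_Ioo_rpow hη hT, hvol,
      ENNReal.ofReal_rpow_of_pos hT, ENNReal.ofReal_div_of_pos h2η, div_eq_mul_inv]
  · rw [h, Real.volume_Ioi, ENNReal.top_rpow_of_pos h2η]
    rw [ENNReal.top_mul (by exact ENNReal.inv_ne_zero.mpr ENNReal.ofReal_ne_top)]
    refine st9_eq_top_of_forall_nat (a := 1 / (2*η)) (by positivity) h2η (fun n => ?_)
    calc ENNReal.ofReal (1 / (2*η) * ((n:ℝ)+1) ^ (2*η))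
        = ∫⁻ s in Set.Ioo 0 ((n:ℝ)+1), ENNReal.ofReal (s ^ (2 * η - 1)) := by
          rw [st9_lintegral_Ioo_rpow hη (by positivity)]
          congr 1; ring
      _ ≤ ∫⁻ s in Set.Ioi 0, ENNReal.ofReal (s ^ (2 * η - 1)) :=
          lintegral_mono_set Set.Ioo_subset_Ioi_self

/-- measurable extension of a function antitone on `(0,∞)` -/
lemma st9_exists_measurable_ext (φ : ℝ → ℝ)
    (hφ_mono : ∀ s t : ℝ, 0 < s → s ≤ t → φ t ≤ φ s) :
    ∃ ψ : ℝ → ℝ, Measurable ψ ∧ (∀ s : ℝ, 0 < s → ψ s = φ s) ∧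
      ((∀ t : ℝ, 0 < t → 0 ≤ φ t) → ∀ s : ℝ, 0 ≤ ψ s) := by
  set m : ℝ → ℝ := fun s => if 0 < s then s else 1 with hm
  have hmpos : ∀ s, 0 < m s := by
    intro s; by_cases h : 0 < s <;> simp [hm, h]
  have hmmeas : Measurable m := by
    refine Measurable.ite ?_ measurable_id measurable_const
    exact measurableSet_Ioi (a := (0:ℝ))
  refine ⟨φ ∘ m, ?_, ?_, ?_⟩
  · refine measurable_of_Iio (fun b => ?_)
    have h1 : (φ ∘ m) ⁻¹' Set.Iio b = m ⁻¹' {s | 0 < s ∧ φ s < b} := by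
      ext s
      simp only [Set.mem_preimage, Function.comp_apply, Set.mem_Iio, Set.mem_setOf_eq]
      exact ⟨fun h => ⟨hmpos s, h⟩, fun h => h.2⟩
    rw [h1]
    refine hmmeas ?_
    have h2 : {s : ℝ | 0 < s ∧ φ s < b} = Set.Ioi 0 \ {s | 0 < s ∧ b ≤ φ s} := by
      ext s
      simp only [Set.mem_setOf_eq, Set.mem_diff, Set.mem_Ioi]
      constructor
      · exact fun h => ⟨h.1, fun h2 => absurd h2.2 (not_le.mpr h.2)⟩
      · exact fun h => ⟨h.1, not_le.mp (fun hb => h.2 ⟨h.1, hb⟩)⟩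
    rw [h2]
    refine measurableSet_Ioi.diff (st9_initial_measurable _ (fun s hs => hs.1) ?_)
    rintro s ⟨hs1, hs2⟩ r hr
    exact ⟨hr.1, le_trans hs2 (hφ_mono r s hr.1 hr.2.le)⟩
  · intro s hs
    simp only [Function.comp_apply, hm, if_pos hs]
  · intro hnn s
    exact hnn (m s) (hmpos s)

lemma st9_rho_bounds {X : Type*} [Nonempty X] (d : X → X → ℝ) (κ : ℝ) (hκ : 1 ≤ κ)
    (hqm : IsQuasiMetric d κ) (x y z : X) :
    max (d x y) (d x z) / (2 * κ) ≤ hyperRho d x y z ∧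
      hyperRho d x y z ≤ max (d x y) (d x z) := by
  obtain ⟨hnn, heq, hsym, htri⟩ := hqm
  have hκ0 : (0:ℝ) < 2 * κ := by linarith
  constructor
  · refine le_ciInf (fun u => ?_)
    rw [div_le_iff₀ hκ0]
    have h1 : d x y ≤ max (d x u) (max (d y u) (d z u)) * (2 * κ) := by
      have := htri x u y
      have h2 : d u y = d y u := hsym u y
      have h3 : d x u ≤ max (d x u) (max (d y u) (d z u)) := le_max_left _ _
      have h4 : d y u ≤ max (d x u) (max (d y u) (d z u)) :=
        le_trans (le_max_left _ _) (le_max_right _ _)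
      nlinarith [hnn x u, hnn y u]
    have h5 : d x z ≤ max (d x u) (max (d y u) (d z u)) * (2 * κ) := by
      have := htri x u z
      have h2 : d u z = d z u := hsym u z
      have h3 : d x u ≤ max (d x u) (max (d y u) (d z u)) := le_max_left _ _
      have h4 : d z u ≤ max (d x u) (max (d y u) (d z u)) :=
        le_trans (le_max_right _ _) (le_max_right _ _)
      nlinarith [hnn x u, hnn z u]
    exact max_le h1 h5
  · have hb : BddBelow (Set.range fun u => max (d x u) (max (d y u) (d z u))) := by
      refine ⟨0, ?_⟩
      rintro v ⟨u, rfl⟩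
      exact le_trans (hnn x u) (le_max_left _ _)
    refine le_trans (ciInf_le hb x) ?_
    have h1 : d x x = 0 := (heq x x).mpr rfl
    have h2 : d y x = d x y := hsym y x
    have h3 : d z x = d x z := hsym z x
    rw [h1, h2, h3]
    exact max_le (le_max_of_le_left (hnn x y)) le_rfl

lemma st9_sq_rpow (z : ℝ≥0∞) (η : ℝ) : z ^ η * z ^ η = z ^ (2 * η) := by
  have h1 : z ^ η * z ^ η = (z ^ η) ^ (2:ℕ) := by ring
  rw [h1, ← ENNReal.rpow_natCast (z ^ η) 2, ← ENNReal.rpow_mul]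
  norm_num
  ring_nf

end AuxST9

/-- Lemma: for nonincreasing `φ : (0,∞) → [0,∞)` there are constants
`0 < C₁ ≤ C₂ < ∞` such that for every `x`,
`C₁ ∫₀^∞ φ(t) t^{2η-1} dt ≤ ∬ φ(ρ(x,y,z)) dμ(y) dμ(z) ≤ C₂ ∫₀^∞ φ(t) t^{2η-1} dt`. -/
theorem statement9 {X : Type*} [MeasurableSpace X]
    (d : X → X → ℝ) (κ : ℝ) (hκ : 1 ≤ κ) (hqm : IsQuasiMetric d κ)
    (hd_meas : Measurable fun p : X × X => d p.1 p.2)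
    (μ : Measure X) (η : ℝ) (hη : 0 < η)
    (a A : ℝ) (ha : 0 < a) (haA : a ≤ A) (hAhl : IsAhlfors d μ η a A)
    (φ : ℝ → ℝ) (hφ_nonneg : ∀ t, 0 < t → 0 ≤ φ t)
    (hφ_mono : ∀ s t, 0 < s → s ≤ t → φ t ≤ φ s) :
    ∃ C₁ C₂ : ℝ, 0 < C₁ ∧ C₁ ≤ C₂ ∧ ∀ x : X,
      ENNReal.ofReal C₁ *
          ∫⁻ t in Set.Ioi (0 : ℝ), ENNReal.ofReal (φ t * t ^ (2 * η - 1)) ≤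
        (∫⁻ y, ∫⁻ z, ENNReal.ofReal (φ (hyperRho d x y z)) ∂μ ∂μ) ∧
      (∫⁻ y, ∫⁻ z, ENNReal.ofReal (φ (hyperRho d x y z)) ∂μ ∂μ) ≤
        ENNReal.ofReal C₂ *
          ∫⁻ t in Set.Ioi (0 : ℝ), ENNReal.ofReal (φ t * t ^ (2 * η - 1)) := by
  classical
  rcases isEmpty_or_nonempty X with hX | hX
  · exact ⟨1, 1, one_pos, le_refl 1, fun x => isEmptyElim x⟩
  obtain ⟨hd_nonneg, hd_iff, hd_symm, hd_tri⟩ := hqm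
  have hA : (0:ℝ) < A := lt_of_lt_of_le ha haA
  -- σ-finiteness
  haveI hsf : SigmaFinite μ := by
    obtain ⟨x₀⟩ := hX
    refine ⟨⟨⟨fun n => {y | d x₀ y < (n:ℝ) + 1}, fun _ => trivial, fun n => ?_, ?_⟩⟩⟩
    · exact lt_of_le_of_lt ((hAhl x₀ ((n:ℝ)+1) (by positivity)).2) ENNReal.ofReal_lt_top
    · refine Set.eq_univ_iff_forall.mpr (fun y => ?_)
      obtain ⟨n, hn⟩ := exists_nat_gt (d x₀ y)
      exact Set.mem_iUnion.mpr ⟨n, lt_trans hn (lt_add_one _)⟩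
  -- points are null
  have hpoint : ∀ x : X, μ {x} = 0 := by
    intro x
    have h1 : μ {x} ≤ ENNReal.ofReal (A * (0:ℝ) ^ η) := by
      refine st9_le_ofReal_of_forall_gt hη le_rfl (fun r hr => ?_)
      refine le_trans (measure_mono ?_) ((hAhl x r hr).2)
      intro y hy
      simp only [Set.mem_singleton_iff] at hy
      subst hy
      simpa [(hd_iff y y).mpr rfl] using hr
    rwa [Real.zero_rpow hη.ne', mul_zero, ENNReal.ofReal_zero, nonpos_iff_eq_zero] at h1
  have hne : ∀ x y : X, y ≠ x → 0 < d x y := by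
    intro x y hy
    refine lt_of_le_of_ne (hd_nonneg x y) (fun he => hy ?_)
    exact ((hd_iff x y).mp he.symm).symm
  -- the measurable extension ψ of φ
  obtain ⟨ψ, hψm, hψeq, hψnn'⟩ := st9_exists_measurable_ext φ hφ_mono
  have hψnn : ∀ s, 0 ≤ ψ s := hψnn' hφ_nonneg
  -- the initial segments
  set S : ℝ → Set ℝ := fun t => {s | 0 < s ∧ t < φ s} with hS
  have hS0 : ∀ t, S t ⊆ Set.Ioi 0 := fun t s hs => hs.1
  have hSI : ∀ t, ∀ s ∈ S t, Set.Ioo 0 s ⊆ S t := by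
    rintro t s ⟨hs1, hs2⟩ r hr
    exact ⟨hr.1, lt_of_lt_of_le hs2 (hφ_mono r s hr.1 hr.2.le)⟩
  set 𝕋 : ℝ → ℝ≥0∞ := fun t => volume (S t) with h𝕋
  set Q : ℝ≥0∞ := ∫⁻ t in Set.Ioi (0:ℝ), 𝕋 t ^ (2 * η) with hQ
  set K : ℝ≥0∞ := ∫⁻ t in Set.Ioi (0:ℝ), ENNReal.ofReal (φ t * t ^ (2 * η - 1)) with hK
  have h2η : (0:ℝ) < 2 * η := by linarith
  -- the K-Q identity
  have h2η0 : ENNReal.ofReal (2 * η) ≠ 0 := by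
    simp [ENNReal.ofReal_eq_zero, not_le, h2η, hη]
  have hKQ : Q = K * ENNReal.ofReal (2 * η) := by
    have hKeq : K = Q * (ENNReal.ofReal (2 * η))⁻¹ := by
      set F : ℝ × ℝ → ℝ≥0∞ :=
        fun q => if q.2 < ψ q.1 then ENNReal.ofReal (q.1 ^ (2*η-1)) else 0 with hF
      have hFmeas : Measurable F := by
        refine Measurable.ite ?_ ?_ measurable_const
        · exact measurableSet_lt measurable_snd (hψm.comp measurable_fst)
        · exact (measurable_fst.pow measurable_const).ennreal_ofReal
      have h1 : K = ∫⁻ t in Set.Ioi (0:ℝ), ∫⁻ l in Set.Ioi (0:ℝ), F (t, l) := by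
        rw [hK]
        refine (MeasureTheory.setLIntegral_congr_fun measurableSet_Ioi
          (fun t ht => ?_))
        have hst : (fun l : ℝ => F (t, l)) =
            Set.indicator (Set.Iio (ψ t)) (fun _ => ENNReal.ofReal (t ^ (2*η-1))) := by
          funext l
          simp [hF, Set.indicator_apply, Set.mem_Iio]
        rw [hst, lintegral_indicator measurableSet_Iio,
          Measure.restrict_restrict measurableSet_Iio, setLIntegral_const]
        have hIoo : Set.Iio (ψ t) ∩ Set.Ioi (0:ℝ) = Set.Ioo 0 (ψ t) := by
          ext l
          simp only [Set.mem_inter_iff, Set.mem_Iio, Set.mem_Ioi, Set.mem_Ioo]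
          tauto
        rw [hIoo, Real.volume_Ioo, sub_zero, hψeq t ht,
          ← ENNReal.ofReal_mul (Real.rpow_nonneg (le_of_lt ht) _), mul_comm (t ^ (2*η-1)) (φ t)]
      have h2 : (∫⁻ t in Set.Ioi (0:ℝ), ∫⁻ l in Set.Ioi (0:ℝ), F (t, l)) =
          ∫⁻ l in Set.Ioi (0:ℝ), ∫⁻ t in Set.Ioi (0:ℝ), F (t, l) :=
        lintegral_lintegral_swap hFmeas.aemeasurable
      have h3 : ∀ l : ℝ, (∫⁻ t in Set.Ioi (0:ℝ), F (t, l)) =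
          𝕋 l ^ (2*η) * (ENNReal.ofReal (2*η))⁻¹ := by
        intro l
        have hmeasset : MeasurableSet {t : ℝ | l < ψ t} := by
          exact measurableSet_lt measurable_const hψm
        have hst : (fun t : ℝ => F (t, l)) =
            Set.indicator {t : ℝ | l < ψ t} (fun t => ENNReal.ofReal (t ^ (2*η-1))) := by
          funext t
          simp [hF, Set.indicator_apply]
        rw [hst, lintegral_indicator hmeasset, Measure.restrict_restrict hmeasset]
        have hSet : {t : ℝ | l < ψ t} ∩ Set.Ioi 0 = S l := by
          ext s
          simp only [Set.mem_inter_iff, Set.mem_setOf_eq, Set.mem_Ioi, hS]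
          constructor
          · rintro ⟨h1', h2'⟩
            exact ⟨h2', by rwa [hψeq s h2'] at h1'⟩
          · rintro ⟨h1', h2'⟩
            exact ⟨by rwa [hψeq s h1'], h1'⟩
        rw [hSet]
        exact st9_lintegral_initial hη (S l) (hS0 l) (hSI l)
      calc K = ∫⁻ t in Set.Ioi (0:ℝ), ∫⁻ l in Set.Ioi (0:ℝ), F (t, l) := h1
        _ = ∫⁻ l in Set.Ioi (0:ℝ), ∫⁻ t in Set.Ioi (0:ℝ), F (t, l) := h2
        _ = ∫⁻ l in Set.Ioi (0:ℝ), 𝕋 l ^ (2*η) * (ENNReal.ofReal (2*η))⁻¹ :=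
            lintegral_congr (fun l => h3 l)
        _ = Q * (ENNReal.ofReal (2*η))⁻¹ :=
            lintegral_mul_const' _ _ (ENNReal.inv_ne_top.mpr h2η0)
    rw [hKeq, mul_assoc, ENNReal.inv_mul_cancel h2η0 ENNReal.ofReal_ne_top, mul_one]
  refine ⟨a^2 * (2*η), A^2 * (2*η) * (2*κ)^(2*η), by positivity, ?_, ?_⟩
  · have h2 : (1:ℝ) ≤ (2*κ)^(2*η) := Real.one_le_rpow (by linarith) (by positivity)
    calc a^2 * (2*η) ≤ A^2 * (2*η) := by
          nlinarith [mul_le_mul haA haA ha.le (le_trans ha.le haA)]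
      _ = A^2 * (2*η) * 1 := by ring
      _ ≤ A^2 * (2*η) * (2*κ)^(2*η) := by
          exact mul_le_mul_of_nonneg_left h2 (by positivity)
  intro x
  -- distribution bounds
  have key : ∀ c : ℝ, 0 < c → ∀ t : ℝ,
      ENNReal.ofReal a * (ENNReal.ofReal c * 𝕋 t) ^ η ≤
        μ {y | 0 < d x y ∧ t < φ (d x y / c)} ∧
      μ {y | 0 < d x y ∧ t < φ (d x y / c)} ≤
        ENNReal.ofReal A * (ENNReal.ofReal c * 𝕋 t) ^ η := by
    intro c hc t
    rcases st9_initial_trichotomy (S t) (hS0 t) (hSI t) with h | ⟨T, hT, hsub, hsup, hvol⟩ | h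
    · have hW : {y | 0 < d x y ∧ t < φ (d x y / c)} = ∅ := by
        refine Set.eq_empty_iff_forall_notMem.mpr (fun y hy => ?_)
        have h1 : d x y / c ∈ S t := ⟨div_pos hy.1 hc, hy.2⟩
        rw [h] at h1
        exact h1
      have h𝕋0 : 𝕋 t = 0 := by
        have : volume (S t) = 0 := by rw [h]; exact measure_empty
        exact this
      rw [hW, h𝕋0, mul_zero, ENNReal.zero_rpow_of_pos hη, measure_empty]
      constructor <;> simp
    · have hvol' : 𝕋 t = ENNReal.ofReal T := hvol
      have hcT : (0:ℝ) < c * T := by positivity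
      have hconst : ENNReal.ofReal c * 𝕋 t = ENNReal.ofReal (c * T) := by
        rw [hvol', ← ENNReal.ofReal_mul hc.le]
      constructor
      · calc ENNReal.ofReal a * (ENNReal.ofReal c * 𝕋 t) ^ η
            = ENNReal.ofReal (a * (c*T)^η) := by
              rw [hconst, ENNReal.ofReal_rpow_of_pos hcT, ← ENNReal.ofReal_mul ha.le]
          _ ≤ μ {y | d x y < c*T} := (hAhl x (c*T) hcT).1
          _ = μ ({y | d x y < c*T} \ {x}) := (measure_diff_null (hpoint x)).symm
          _ ≤ μ {y | 0 < d x y ∧ t < φ (d x y / c)} := by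
              refine measure_mono (fun y hy => ?_)
              have hyx : y ≠ x := fun he => hy.2 (Set.mem_singleton_iff.mpr he)
              have hpos : 0 < d x y := hne x y hyx
              refine ⟨hpos, ?_⟩
              have h1 : d x y / c ∈ Set.Ioo 0 T := by
                refine ⟨div_pos hpos hc, (div_lt_iff₀ hc).mpr ?_⟩
                have := hy.1
                simp only [Set.mem_setOf_eq] at this
                linarith [this]
              exact (hsub h1).2
      · refine le_trans (st9_le_ofReal_of_forall_gt (A := A) hη hcT.le (fun r hr => ?_)) ?_
        · refine le_trans (measure_mono ?_) ((hAhl x r (lt_trans hcT hr)).2)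
          intro y hy
          have h1 : d x y / c ∈ S t := ⟨div_pos hy.1 hc, hy.2⟩
          have h2 : d x y / c ≤ T := (hsup h1).2
          have h3 : d x y ≤ c * T := by
            rw [div_le_iff₀ hc] at h2
            linarith
          exact lt_of_le_of_lt h3 hr
        · refine le_of_eq ?_
          rw [hconst, ENNReal.ofReal_rpow_of_pos hcT, ← ENNReal.ofReal_mul hA.le]
    · have h𝕋top : 𝕋 t = ⊤ := by
        have : volume (S t) = ⊤ := by rw [h]; exact Real.volume_Ioi
        exact this
      have hset : {y | 0 < d x y ∧ t < φ (d x y / c)} = {y | 0 < d x y} := by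
        ext y
        simp only [Set.mem_setOf_eq, and_iff_left_iff_imp]
        intro hy
        have h1 : d x y / c ∈ S t := by
          rw [h]
          exact Set.mem_Ioi.mpr (div_pos hy hc)
        exact h1.2
      have hμtop : μ {y | 0 < d x y} = ⊤ := by
        refine st9_eq_top_of_forall_nat ha hη (fun n => ?_)
        calc ENNReal.ofReal (a * ((n:ℝ)+1)^η)
            ≤ μ {y | d x y < (n:ℝ)+1} := (hAhl x _ (by positivity)).1
          _ = μ ({y | d x y < (n:ℝ)+1} \ {x}) := (measure_diff_null (hpoint x)).symm
          _ ≤ μ {y | 0 < d x y} := by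
              refine measure_mono (fun y hy => ?_)
              exact hne x y (fun he => hy.2 (Set.mem_singleton_iff.mpr he))
      rw [hset, hμtop, h𝕋top]
      have hc0 : ENNReal.ofReal c ≠ 0 := by
        simp [ENNReal.ofReal_eq_zero, not_le, hc]
      have hA0 : ENNReal.ofReal A ≠ 0 := by
        simp [ENNReal.ofReal_eq_zero, not_le, hA]
      rw [ENNReal.mul_top hc0, ENNReal.top_rpow_of_pos hη, ENNReal.mul_top hA0]
      exact ⟨le_top, le_rfl⟩
  -- product to distribution
  have hprodeq : ∀ c : ℝ, 0 < c →
      (∫⁻ y, ∫⁻ z, ENNReal.ofReal (ψ (max (d x y) (d x z) / c)) ∂μ ∂μ) =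
      ∫⁻ t in Set.Ioi (0:ℝ),
        μ {y | 0 < d x y ∧ t < φ (d x y / c)} * μ {y | 0 < d x y ∧ t < φ (d x y / c)} := by
    intro c hc
    have hDmeas : Measurable fun y : X => d x y :=
      hd_meas.comp (measurable_const.prodMk measurable_id)
    have hfmeas : Measurable fun p : X × X => ψ (max (d x p.1) (d x p.2) / c) := by
      refine hψm.comp ?_
      exact ((hDmeas.comp measurable_fst).max (hDmeas.comp measurable_snd)).div_const c
    have hiter : (∫⁻ y, ∫⁻ z, ENNReal.ofReal (ψ (max (d x y) (d x z) / c)) ∂μ ∂μ)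
        = ∫⁻ p : X × X, ENNReal.ofReal (ψ (max (d x p.1) (d x p.2) / c)) ∂(μ.prod μ) :=
      (lintegral_prod _ hfmeas.ennreal_ofReal.aemeasurable).symm
    rw [hiter, lintegral_eq_lintegral_meas_lt (μ.prod μ)
      (Filter.Eventually.of_forall (fun p => hψnn _)) hfmeas.aemeasurable]
    refine MeasureTheory.setLIntegral_congr_fun measurableSet_Ioi
      (fun t ht => ?_)
    set Gt := {y | 0 < d x y ∧ t < φ (d x y / c)} with hGtdef
    have hGG : Gt ×ˢ Gt ⊆ {p : X × X | t < ψ (max (d x p.1) (d x p.2) / c)} := by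
      rintro ⟨y, z⟩ ⟨⟨hy1, hy2⟩, hz1, hz2⟩
      have hM : 0 < max (d x y) (d x z) := lt_max_of_lt_left hy1
      have : t < φ (max (d x y) (d x z) / c) := by
        rcases max_choice (d x y) (d x z) with he | he <;> rw [he]
        · exact hy2
        · exact hz2
      rw [Set.mem_setOf_eq, hψeq _ (div_pos hM hc)]
      exact this
    have hdiff : {p : X × X | t < ψ (max (d x p.1) (d x p.2) / c)} \ (Gt ×ˢ Gt) ⊆
        (({x} : Set X) ×ˢ (Set.univ : Set X)) ∪ ((Set.univ : Set X) ×ˢ ({x} : Set X)) := by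
      rintro ⟨y, z⟩ ⟨hp, hnp⟩
      by_contra hcon
      simp only [Set.mem_union, Set.mem_prod, Set.mem_singleton_iff, Set.mem_univ,
        and_true, true_and, not_or] at hcon
      obtain ⟨hyx, hzx⟩ := hcon
      have hy0 : 0 < d x y := hne x y hyx
      have hz0 : 0 < d x z := hne x z hzx
      have hM : 0 < max (d x y) (d x z) := lt_max_of_lt_left hy0
      rw [Set.mem_setOf_eq, hψeq _ (div_pos hM hc)] at hp
      refine hnp ⟨⟨hy0, ?_⟩, hz0, ?_⟩
      · refine lt_of_lt_of_le hp (hφ_mono _ _ (div_pos hy0 hc) ?_)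
        gcongr
        exact le_max_left _ _
      · refine lt_of_lt_of_le hp (hφ_mono _ _ (div_pos hz0 hc) ?_)
        gcongr
        exact le_max_right _ _
    have hnull : (μ.prod μ) ((({x} : Set X) ×ˢ (Set.univ : Set X)) ∪
        ((Set.univ : Set X) ×ˢ ({x} : Set X))) = 0 := by
      refine measure_union_null ?_ ?_ <;> rw [Measure.prod_prod] <;>
        simp [hpoint x]
    have hmeq : (μ.prod μ) {p : X × X | t < ψ (max (d x p.1) (d x p.2) / c)} =
        (μ.prod μ) (Gt ×ˢ Gt) := by
      refine measure_congr (MeasureTheory.ae_eq_set.mpr ⟨?_, ?_⟩)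
      · exact measure_mono_null hdiff hnull
      · rw [Set.diff_eq_empty.mpr hGG]
        exact measure_empty
    rw [hmeq, Measure.prod_prod]
  -- sandwich of the double integral by the scaled integrals
  have hcompare_lo :
      (∫⁻ y, ∫⁻ z, ENNReal.ofReal (ψ (max (d x y) (d x z) / 1)) ∂μ ∂μ) ≤
      (∫⁻ y, ∫⁻ z, ENNReal.ofReal (φ (hyperRho d x y z)) ∂μ ∂μ) := by
    have hae_ne : ∀ᵐ y ∂μ, y ≠ x := by
      rw [MeasureTheory.ae_iff]
      have h1 : {y : X | ¬ y ≠ x} = {x} := by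
        ext y; simp
      rw [h1]
      exact hpoint x
    refine lintegral_mono_ae ?_
    filter_upwards [hae_ne] with y hy
    refine lintegral_mono (fun z => ?_)
    have hM : 0 < max (d x y) (d x z) := lt_max_of_lt_left (hne x y hy)
    rw [div_one, hψeq _ hM]
    refine ENNReal.ofReal_le_ofReal ?_
    obtain ⟨hlo, hhi⟩ := st9_rho_bounds d κ hκ ⟨hd_nonneg, hd_iff, hd_symm, hd_tri⟩ x y z
    have hρpos : 0 < hyperRho d x y z :=
      lt_of_lt_of_le (div_pos hM (by linarith)) hlo
    exact hφ_mono _ _ hρpos hhi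
  have hcompare_hi :
      (∫⁻ y, ∫⁻ z, ENNReal.ofReal (φ (hyperRho d x y z)) ∂μ ∂μ) ≤
      (∫⁻ y, ∫⁻ z, ENNReal.ofReal (ψ (max (d x y) (d x z) / (2*κ))) ∂μ ∂μ) := by
    have hae_ne : ∀ᵐ y ∂μ, y ≠ x := by
      rw [MeasureTheory.ae_iff]
      have h1 : {y : X | ¬ y ≠ x} = {x} := by
        ext y; simp
      rw [h1]
      exact hpoint x
    refine lintegral_mono_ae ?_
    filter_upwards [hae_ne] with y hy
    refine lintegral_mono (fun z => ?_)
    have hM : 0 < max (d x y) (d x z) := lt_max_of_lt_left (hne x y hy)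
    have hMc : 0 < max (d x y) (d x z) / (2*κ) := div_pos hM (by linarith)
    rw [hψeq _ hMc]
    refine ENNReal.ofReal_le_ofReal ?_
    obtain ⟨hlo, hhi⟩ := st9_rho_bounds d κ hκ ⟨hd_nonneg, hd_iff, hd_symm, hd_tri⟩ x y z
    exact hφ_mono _ _ hMc hlo
  -- bounds for the distribution integrals
  have hQbound : ∀ c : ℝ, 0 < c →
      ENNReal.ofReal (a^2) * (ENNReal.ofReal (c^(2*η)) * Q) ≤
        (∫⁻ y, ∫⁻ z, ENNReal.ofReal (ψ (max (d x y) (d x z) / c)) ∂μ ∂μ) ∧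
      (∫⁻ y, ∫⁻ z, ENNReal.ofReal (ψ (max (d x y) (d x z) / c)) ∂μ ∂μ) ≤
        ENNReal.ofReal (A^2) * (ENNReal.ofReal (c^(2*η)) * Q) := by
    intro c hc
    have halg : ∀ (v : ℝ), 0 ≤ v → ∀ (w : ℝ≥0∞),
        (ENNReal.ofReal v * (ENNReal.ofReal c * w) ^ η) *
          (ENNReal.ofReal v * (ENNReal.ofReal c * w) ^ η) =
        ENNReal.ofReal (v^2) * (ENNReal.ofReal (c^(2*η)) * w^(2*η)) := by
      intro v hv w
      calc (ENNReal.ofReal v * (ENNReal.ofReal c * w) ^ η) *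
            (ENNReal.ofReal v * (ENNReal.ofReal c * w) ^ η)
          = (ENNReal.ofReal v * ENNReal.ofReal v) *
            ((ENNReal.ofReal c * w) ^ η * (ENNReal.ofReal c * w) ^ η) := by ring
        _ = ENNReal.ofReal (v^2) * (ENNReal.ofReal c * w) ^ (2*η) := by
            rw [st9_sq_rpow, ← ENNReal.ofReal_mul hv, ← pow_two]
        _ = ENNReal.ofReal (v^2) * (ENNReal.ofReal (c^(2*η)) * w^(2*η)) := by
            rw [ENNReal.mul_rpow_of_nonneg _ _ (by positivity : (0:ℝ) ≤ 2*η),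
              ENNReal.ofReal_rpow_of_pos hc]
    rw [hprodeq c hc]
    constructor
    · calc ENNReal.ofReal (a^2) * (ENNReal.ofReal (c^(2*η)) * Q)
          = ∫⁻ t in Set.Ioi (0:ℝ),
              ENNReal.ofReal (a^2) * (ENNReal.ofReal (c^(2*η)) * 𝕋 t ^ (2*η)) := by
            rw [hQ, ← lintegral_const_mul' (ENNReal.ofReal (c^(2*η))) _ ENNReal.ofReal_ne_top,
              ← lintegral_const_mul' (ENNReal.ofReal (a^2)) _ ENNReal.ofReal_ne_top]
        _ = ∫⁻ t in Set.Ioi (0:ℝ),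
              (ENNReal.ofReal a * (ENNReal.ofReal c * 𝕋 t) ^ η) *
                (ENNReal.ofReal a * (ENNReal.ofReal c * 𝕋 t) ^ η) :=
            lintegral_congr (fun t => (halg a ha.le (𝕋 t)).symm)
        _ ≤ ∫⁻ t in Set.Ioi (0:ℝ),
              μ {y | 0 < d x y ∧ t < φ (d x y / c)} * μ {y | 0 < d x y ∧ t < φ (d x y / c)} :=
            lintegral_mono (fun t => mul_le_mul' (key c hc t).1 (key c hc t).1)
    · calc (∫⁻ t in Set.Ioi (0:ℝ),
              μ {y | 0 < d x y ∧ t < φ (d x y / c)} * μ {y | 0 < d x y ∧ t < φ (d x y / c)})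
          ≤ ∫⁻ t in Set.Ioi (0:ℝ),
              (ENNReal.ofReal A * (ENNReal.ofReal c * 𝕋 t) ^ η) *
                (ENNReal.ofReal A * (ENNReal.ofReal c * 𝕋 t) ^ η) :=
            lintegral_mono (fun t => mul_le_mul' (key c hc t).2 (key c hc t).2)
        _ = ∫⁻ t in Set.Ioi (0:ℝ),
              ENNReal.ofReal (A^2) * (ENNReal.ofReal (c^(2*η)) * 𝕋 t ^ (2*η)) :=
            lintegral_congr (fun t => halg A hA.le (𝕋 t))
        _ = ENNReal.ofReal (A^2) * (ENNReal.ofReal (c^(2*η)) * Q) := by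
            rw [hQ, ← lintegral_const_mul' (ENNReal.ofReal (c^(2*η))) _ ENNReal.ofReal_ne_top,
              ← lintegral_const_mul' (ENNReal.ofReal (A^2)) _ ENNReal.ofReal_ne_top]
  constructor
  · calc ENNReal.ofReal (a^2 * (2*η)) * K
        = ENNReal.ofReal (a^2) * (ENNReal.ofReal ((1:ℝ)^(2*η)) * Q) := by
          rw [Real.one_rpow, ENNReal.ofReal_one, one_mul, hKQ,
            ENNReal.ofReal_mul (by positivity : (0:ℝ) ≤ a^2)]
          ring
      _ ≤ (∫⁻ y, ∫⁻ z, ENNReal.ofReal (ψ (max (d x y) (d x z) / 1)) ∂μ ∂μ) :=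
          (hQbound 1 one_pos).1
      _ ≤ _ := hcompare_lo
  · calc (∫⁻ y, ∫⁻ z, ENNReal.ofReal (φ (hyperRho d x y z)) ∂μ ∂μ)
        ≤ (∫⁻ y, ∫⁻ z, ENNReal.ofReal (ψ (max (d x y) (d x z) / (2*κ))) ∂μ ∂μ) :=
          hcompare_hi
      _ ≤ ENNReal.ofReal (A^2) * (ENNReal.ofReal ((2*κ)^(2*η)) * Q) :=
          (hQbound (2*κ) (by linarith)).2
      _ = ENNReal.ofReal (A^2 * (2*η) * (2*κ)^(2*η)) * K := by
          have e1 : A^2 * (2*η) * (2*κ)^(2*η) = A^2 * (2*κ)^(2*η) * (2*η) := by ring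
          rw [e1, ENNReal.ofReal_mul (by positivity : (0:ℝ) ≤ A^2 * (2*κ)^(2*η)),
            ENNReal.ofReal_mul (by positivity : (0:ℝ) ≤ A^2), hKQ]
          ring
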